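/- arXiv:1410.8348 — 3 statements merged into one kernel-verified Lean document; each statement's English description precedes it below -/
import Mathlib

section
/- For all v in a nonempty closed convex set K ⊆ U and all q ∈ V, the quantity inf over v' ∈ K of J_low(v', q) is a lower bound for J(u) := min over K of J, i.e., inf_{v' ∈ K} J_low(v', q) ≤ J(u), where J_low(v,q) := E_v(y_d) - E_v(q) + ‖v - u_d‖_N² and E_v(q) := a(q,q) - 2ℓ(q) - 2(Bv)(q). -/
open RealInnerProductSpace

theorem lower_bound_inf_le_optimal_cost
    {V U : Type*} [NormedAddCommGroup V] [InnerProductSpace ℝ V] [CompleteSpace V]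
    [NormedAddCommGroup U] [InnerProductSpace ℝ U] [CompleteSpace U]
    (a : V →ₗ[ℝ] V →ₗ[ℝ] ℝ)
    (hsym : ∀ q z : V, a q z = a z q)
    (hbdd : ∃ C : ℝ, ∀ q z : V, |a q z| ≤ C * ‖q‖ * ‖z‖)
    (hcoer : ∃ c : ℝ, 0 < c ∧ ∀ q : V, c * ‖q‖ ^ 2 ≤ a q q)
    (B : U →L[ℝ] (V →L[ℝ] ℝ)) (ℓ : V →L[ℝ] ℝ)
    (y : U → V) (hy : ∀ (v : U) (q : V), a (y v) q = ℓ q + B v q)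
    (N : U →L[ℝ] U)
    (hNsym : ∀ w w' : U, ⟪N w, w'⟫ = ⟪w, N w'⟫)
    (hNpos : ∃ κ : ℝ, 0 < κ ∧ ∀ w : U, κ * ‖w‖ ^ 2 ≤ ⟪N w, w⟫)
    (y_d : V) (u_d : U)
    (E : U → V → ℝ)
    (hE : ∀ (v : U) (q : V), E v q = a q q - 2 * ℓ q - 2 * B v q)
    (Jlow : U → V → ℝ)
    (hJlow : ∀ (v : U) (q : V), Jlow v q = E v y_d - E v q + ⟪N (v - u_d), v - u_d⟫)
    (J : U → ℝ)
    (hJ : ∀ v : U, J v = a (y v - y_d) (y v - y_d) + ⟪N (v - u_d), v - u_d⟫)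
    (K : Set U) (hK : K.Nonempty) (hKc : IsClosed K) (hKconv : Convex ℝ K)
    (u : U) (hu : u ∈ K) (hmin : ∀ v ∈ K, J u ≤ J v) :
    ∀ q : V, sInf ((fun v' : U => Jlow v' q) '' K) ≤ J u := by
  intro q
  obtain ⟨c, hc, hcoer⟩ := hcoer
  obtain ⟨κ, hκ, hNpos⟩ := hNpos
  have hapos : ∀ z : V, 0 ≤ a z z := fun z =>
    le_trans (by positivity) (hcoer z)
  have hNpos' : ∀ w : U, 0 ≤ ⟪N w, w⟫ := fun w =>
    le_trans (by positivity) (hNpos w)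
  have hle : ∀ v : U, Jlow v q ≤ J v := by
    intro v
    have h1 : a (y v) q = ℓ q + B v q := hy v q
    have h2 : a (y v) y_d = ℓ y_d + B v y_d := hy v y_d
    have key : J v - Jlow v q = a (q - y v) (q - y v) := by
      rw [hJ, hJlow, hE, hE]
      simp only [map_sub, LinearMap.sub_apply]
      rw [hsym y_d (y v), hsym q (y v)] at *
      linarith [h1, h2]
    nlinarith [hapos (q - y v)]
  have hJu : Jlow u q ≤ J u := hle u
  by_cases hb : BddBelow ((fun v' : U => Jlow v' q) '' K)
  · exact le_trans (csInf_le hb ⟨u, hu, rfl⟩) hJu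
  · rw [Real.sInf_of_not_bddBelow hb]
    rw [hJ]
    exact add_nonneg (hapos _) (hNpos' _)
end

section
/- (Positivity of the error measure) In the elliptic optimal control setting with u the minimizer of J over the nonempty closed convex K, the error measure err²(v) := a(y(v)-y(u), y(v)-y(u)) + ‖v-u‖_N² + ⟨J'(u), v-u⟩ is nonnegative for every v ∈ K, and err²(v) = 0 if and only if v = u. -/
open RealInnerProductSpace

theorem error_measure_nonneg_and_vanishes_iff
    {V U : Type*} [NormedAddCommGroup V] [InnerProductSpace ℝ V] [CompleteSpace V]
    [NormedAddCommGroup U] [InnerProductSpace ℝ U] [CompleteSpace U]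
    (K : Set U) (hK : K.Nonempty) (hKc : IsClosed K) (hKconv : Convex ℝ K)
    (a : V →ₗ[ℝ] V →ₗ[ℝ] ℝ)
    (hsym : ∀ q z : V, a q z = a z q)
    (hbdd : ∃ C : ℝ, ∀ q z : V, |a q z| ≤ C * ‖q‖ * ‖z‖)
    (hcoer : ∃ c : ℝ, 0 < c ∧ ∀ q : V, c * ‖q‖ ^ 2 ≤ a q q)
    (B : U →L[ℝ] (V →L[ℝ] ℝ)) (ℓ : V →L[ℝ] ℝ)
    (y : U → V) (hy : ∀ (v : U) (q : V), a (y v) q = ℓ q + B v q)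
    (N : U →L[ℝ] U)
    (hNsym : ∀ w w' : U, ⟪N w, w'⟫ = ⟪w, N w'⟫)
    (hNpos : ∃ κ : ℝ, 0 < κ ∧ ∀ w : U, κ * ‖w‖ ^ 2 ≤ ⟪N w, w⟫)
    (y_d : V) (u_d : U)
    (J : U → ℝ)
    (hJ : ∀ v : U, J v = a (y v - y_d) (y v - y_d) + ⟪N (v - u_d), v - u_d⟫)
    (u : U) (hu : u ∈ K) (hmin : ∀ v ∈ K, J u ≤ J v)
    (err2 : U → ℝ)
    (herr2 : ∀ v : U, err2 v = a (y v - y u) (y v - y u) + ⟪N (v - u), v - u⟫ +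
      (2 * B (v - u) (y u - y_d) + 2 * ⟪N (u - u_d), v - u⟫)) :
    ∀ v ∈ K, 0 ≤ err2 v ∧ (err2 v = 0 ↔ v = u) := by
  obtain ⟨c, hc, hcoer⟩ := hcoer
  obtain ⟨κ, hκ, hNpos⟩ := hNpos
  intro v hv
  -- equation for e := y v - y u
  have he : ∀ q : V, a (y v - y u) q = B (v - u) q := by
    intro q
    have h1 := hy v q
    have h2 := hy u q
    simp only [map_sub, LinearMap.sub_apply, ContinuousLinearMap.sub_apply]
    linarith
  -- y is affine along the segment
  have hyt : ∀ t : ℝ, y (u + t • (v - u)) = y u + t • (y v - y u) := by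
    intro t
    have hz : ∀ q : V, a (y (u + t • (v - u)) - (y u + t • (y v - y u))) q = 0 := by
      intro q
      have h1 := hy (u + t • (v - u)) q
      have h2 := hy u q
      have h3 := he q
      have hB : B (u + t • (v - u)) q = B u q + t * B (v - u) q := by
        simp [map_add, map_smul]
      have hA : a (y (u + t • (v - u)) - (y u + t • (y v - y u))) q
          = a (y (u + t • (v - u))) q - a (y u) q - t * a (y v - y u) q := by
        simp only [map_sub, map_add, map_smul, LinearMap.sub_apply, LinearMap.add_apply,
          LinearMap.smul_apply, smul_eq_mul]
        ring
      rw [hA, h1, hB, h2, h3]; ring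
    have h := hcoer (y (u + t • (v - u)) - (y u + t • (y v - y u)))
    rw [hz _] at h
    have hn : ‖y (u + t • (v - u)) - (y u + t • (y v - y u))‖ ^ 2 = 0 := by
      nlinarith [sq_nonneg ‖y (u + t • (v - u)) - (y u + t • (y v - y u))‖]
    exact sub_eq_zero.mp (norm_eq_zero.mp
      (pow_eq_zero_iff (n := 2) (by norm_num) |>.mp hn))
  -- expansion of J along the segment
  have hJt : ∀ t : ℝ, J (u + t • (v - u)) = J u
      + t ^ 2 * (a (y v - y u) (y v - y u) + ⟪N (v - u), v - u⟫)
      + t * (2 * B (v - u) (y u - y_d) + 2 * ⟪N (u - u_d), v - u⟫) := by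
    intro t
    rw [hJ, hJ, hyt t]
    have hx1 : y u + t • (y v - y u) - y_d = (y u - y_d) + t • (y v - y u) := by abel
    have hx2 : u + t • (v - u) - u_d = (u - u_d) + t • (v - u) := by abel
    rw [hx1, hx2]
    have ha : a ((y u - y_d) + t • (y v - y u)) ((y u - y_d) + t • (y v - y u))
        = a (y u - y_d) (y u - y_d) + 2 * t * a (y v - y u) (y u - y_d)
          + t ^ 2 * a (y v - y u) (y v - y u) := by
      simp only [map_add, map_smul, LinearMap.add_apply, LinearMap.smul_apply, smul_eq_mul]
      rw [hsym (y u - y_d) (y v - y u)]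
      ring
    have hN : ⟪N ((u - u_d) + t • (v - u)), (u - u_d) + t • (v - u)⟫
        = ⟪N (u - u_d), u - u_d⟫ + 2 * t * ⟪N (u - u_d), v - u⟫
          + t ^ 2 * ⟪N (v - u), v - u⟫ := by
      simp only [map_add, map_smul, inner_add_left, inner_add_right, real_inner_smul_left,
        real_inner_smul_right]
      have h1 : ⟪N (v - u), u - u_d⟫ = ⟪N (u - u_d), v - u⟫ := by
        rw [hNsym, real_inner_comm]
      rw [h1]; ring
    rw [ha, hN]
    have h3 : a (y v - y u) (y u - y_d) = B (v - u) (y u - y_d) := he _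
    rw [h3]; ring
  have hv1 : u + (1 : ℝ) • (v - u) = v := by simp
  have hE : err2 v = (a (y v - y u) (y v - y u) + ⟪N (v - u), v - u⟫)
      + (2 * B (v - u) (y u - y_d) + 2 * ⟪N (u - u_d), v - u⟫) := by
    rw [herr2 v]
  have hnonneg : 0 ≤ err2 v := by
    have h1 := hJt 1
    rw [hv1] at h1
    have := hmin v hv
    rw [hE]; linarith
  refine ⟨hnonneg, ?_, ?_⟩
  · intro h0
    -- midpoint argument
    have hmid : u + (1/2 : ℝ) • (v - u) ∈ K := by
      have := hKconv hu hv (by norm_num : (0:ℝ) ≤ 1/2) (by norm_num : (0:ℝ) ≤ 1/2)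
        (by norm_num)
      have heq : (1/2 : ℝ) • u + (1/2 : ℝ) • v = u + (1/2 : ℝ) • (v - u) := by
        module
      rwa [heq] at this
    have h2 := hJt (1/2)
    have h3 := hmin _ hmid
    rw [hE] at h0
    have hQle : a (y v - y u) (y v - y u) + ⟪N (v - u), v - u⟫ ≤ 0 := by nlinarith
    have hQ1 := hcoer (y v - y u)
    have hQ2 := hNpos (v - u)
    have hw0 : ‖v - u‖ ^ 2 = 0 := by nlinarith [sq_nonneg ‖v - u‖, sq_nonneg ‖y v - y u‖]
    have : v - u = 0 := by
      simpa using norm_eq_zero.mp (pow_eq_zero_iff (n := 2) (by norm_num) |>.mp hw0)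
    exact sub_eq_zero.mp this
  · intro h
    subst h
    rw [herr2]
    simp
end

section
/- (Saddle point characterization) In the elliptic optimal control setting, the pair (u, y(u)) is a saddle point of L(v, q) := E_v(y_d) - E_v(q) + ‖v - u_d‖_N² on K × V: L(u, q) ≤ L(u, y(u)) ≤ L(v, y(u)) for all v ∈ K and q ∈ V, where E_v(q) := a(q,q) - 2ℓ(q) - 2(Bv)(q) and u is the minimizer of J over K with state y(u). -/
open RealInnerProductSpace

theorem saddle_point_characterization
    {V U : Type*} [NormedAddCommGroup V] [InnerProductSpace ℝ V] [CompleteSpace V]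
    [NormedAddCommGroup U] [InnerProductSpace ℝ U] [CompleteSpace U]
    (K : Set U) (hK : K.Nonempty) (hKc : IsClosed K) (hKconv : Convex ℝ K)
    (a : V →ₗ[ℝ] V →ₗ[ℝ] ℝ)
    (hsym : ∀ q z : V, a q z = a z q)
    (hbdd : ∃ C : ℝ, ∀ q z : V, |a q z| ≤ C * ‖q‖ * ‖z‖)
    (hcoer : ∃ c : ℝ, 0 < c ∧ ∀ q : V, c * ‖q‖ ^ 2 ≤ a q q)
    (B : U →L[ℝ] (V →L[ℝ] ℝ)) (ℓ : V →L[ℝ] ℝ)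
    (y : U → V) (hy : ∀ (v : U) (q : V), a (y v) q = ℓ q + B v q)
    (N : U →L[ℝ] U)
    (hNsym : ∀ w w' : U, ⟪N w, w'⟫ = ⟪w, N w'⟫)
    (hNpos : ∃ κ : ℝ, 0 < κ ∧ ∀ w : U, κ * ‖w‖ ^ 2 ≤ ⟪N w, w⟫)
    (y_d : V) (u_d : U)
    (E : U → V → ℝ)
    (hE : ∀ (v : U) (q : V), E v q = a q q - 2 * ℓ q - 2 * B v q)
    (L : U → V → ℝ)
    (hL : ∀ (v : U) (q : V), L v q = E v y_d - E v q + ⟪N (v - u_d), v - u_d⟫)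
    (J : U → ℝ)
    (hJ : ∀ v : U, J v = a (y v - y_d) (y v - y_d) + ⟪N (v - u_d), v - u_d⟫)
    (u : U) (hu : u ∈ K) (hmin : ∀ v ∈ K, J u ≤ J v) :
    (∀ q : V, L u q ≤ L u (y u)) ∧ ∀ v ∈ K, L u (y u) ≤ L v (y u) := by
  obtain ⟨c, hc, hco⟩ := hcoer
  obtain ⟨κ, hκ, hNp⟩ := hNpos
  have ha0 : ∀ q : V, 0 ≤ a q q := fun q => le_trans (by positivity) (hco q)
  have hN0 : ∀ w : U, 0 ≤ ⟪N w, w⟫ := fun w => le_trans (by positivity) (hNp w)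
  have hainj : ∀ d : V, (∀ q, a d q = 0) → d = 0 := by
    intro d hd
    have h1 := hco d
    rw [hd d] at h1
    have h2 : ‖d‖ ^ 2 = 0 := by nlinarith [sq_nonneg ‖d‖]
    have h3 : ‖d‖ = 0 := by
      have := sq_eq_zero_iff.mp h2
      exact this
    exact norm_eq_zero.mp h3
  have expand4 : ∀ x z p q : V, a (x - z) (p - q) = a x p - a x q - a z p + a z q := by
    intro x z p q
    simp [map_sub, LinearMap.sub_apply]
    ring
  have expand2 : ∀ (x z : V) (t : ℝ),
      a (x + t • z) (x + t • z) = a x x + 2 * t * a x z + t ^ 2 * a z z := by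
    intro x z t
    simp [map_add, map_smul, LinearMap.add_apply, LinearMap.smul_apply, smul_eq_mul]
    rw [hsym z x]
    ring
  have expandN : ∀ (p w : U) (t : ℝ),
      ⟪N (p + t • w), p + t • w⟫ = ⟪N p, p⟫ + 2 * t * ⟪N p, w⟫ + t ^ 2 * ⟪N w, w⟫ := by
    intro p w t
    rw [map_add, map_smul, inner_add_left, inner_add_right, inner_add_right,
      real_inner_smul_left, real_inner_smul_right, real_inner_smul_left, real_inner_smul_right]
    rw [hNsym w p, real_inner_comm w (N p)]
    ring
  constructor
  · intro q
    simp only [hL, hE]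
    have h1 := expand4 q (y u) q (y u)
    have h2 := ha0 (q - y u)
    have h3 := hy u q
    have h4 := hy u (y u)
    have h5 := hsym q (y u)
    linarith
  · intro v hv
    -- affinity of y
    have haff : ∀ t : ℝ, y (u + t • (v - u)) = y u + t • (y v - y u) := by
      intro t
      have hd : ∀ q, a (y (u + t • (v - u)) - (y u + t • (y v - y u))) q = 0 := by
        intro q
        have h1 := hy (u + t • (v - u)) q
        have h2 := hy u q
        have h3 := hy v q
        have hB : B (u + t • (v - u)) q = B u q + t * (B v q - B u q) := by
          first
          | (simp [map_add, map_smul, map_sub, smul_eq_mul]; ring)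
          | simp [map_add, map_smul, map_sub, smul_eq_mul]
        have hA : a (y (u + t • (v - u)) - (y u + t • (y v - y u))) q
            = a (y (u + t • (v - u))) q - a (y u) q - t * (a (y v) q - a (y u) q) := by
          simp [map_sub, map_add, map_smul, LinearMap.sub_apply, LinearMap.add_apply,
            LinearMap.smul_apply, smul_eq_mul]
          ring
        rw [hA, h1, h2, h3, hB]
        ring
      have := hainj _ hd
      have := sub_eq_zero.mp this
      exact this
    set D : ℝ := a (y u - y_d) (y v - y u) + ⟪N (u - u_d), v - u⟫ with hD
    set C : ℝ := a (y v - y u) (y v - y u) + ⟪N (v - u), v - u⟫ with hCdef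
    have hC0 : 0 ≤ C := add_nonneg (ha0 _) (hN0 _)
    have hstep : ∀ t : ℝ, 0 < t → t ≤ 1 → 0 ≤ 2 * t * D + t ^ 2 * C := by
      intro t ht0 ht1
      have hmem : u + t • (v - u) ∈ K := by
        have := hKconv hu hv (by linarith : (0:ℝ) ≤ 1 - t) (le_of_lt ht0) (by ring)
        convert this using 1
        rw [sub_smul, one_smul, smul_sub]
        abel
      have h := hmin _ hmem
      rw [hJ, hJ, haff t] at h
      have e1 : y u + t • (y v - y u) - y_d = (y u - y_d) + t • (y v - y u) := by abel
      have e2 : u + t • (v - u) - u_d = (u - u_d) + t • (v - u) := by abel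
      rw [e1, e2, expand2, expandN] at h
      simp only [hD, hCdef]
      linarith
    have hVI : 0 ≤ D := by
      by_contra hX
      push_neg at hX
      set t : ℝ := min 1 ((-D) / (C + 1)) with ht
      have hC1 : (0:ℝ) < C + 1 := by linarith
      have ht0 : 0 < t := lt_min one_pos (div_pos (by linarith) hC1)
      have ht1 : t ≤ 1 := min_le_left _ _
      have ht2 : t * (C + 1) ≤ -D := by
        have := min_le_right 1 ((-D) / (C + 1))
        calc t * (C + 1) ≤ ((-D) / (C + 1)) * (C + 1) := by
              exact mul_le_mul_of_nonneg_right this (le_of_lt hC1)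
          _ = -D := by field_simp
      have h2 : 0 ≤ 2 * D + t * C := by
        have h1 := hstep t ht0 ht1
        nlinarith
      nlinarith
    -- final inequality
    simp only [hL, hE]
    have hNe : ⟪N (v - u_d), v - u_d⟫
        = ⟪N (u - u_d), u - u_d⟫ + 2 * ⟪N (u - u_d), v - u⟫ + ⟪N (v - u), v - u⟫ := by
      have e3 : v - u_d = (u - u_d) + (1:ℝ) • (v - u) := by
        rw [one_smul]; abel
      rw [e3, expandN]
      ring
    have hA4 := expand4 (y u) y_d (y v) (y u)
    have e5 := hy u (y u)
    have e6 := hy v (y u)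
    have e7 := hy u y_d
    have e8 := hy v y_d
    have s1 := hsym (y u) (y v)
    have s2 := hsym y_d (y v)
    have s3 := hsym y_d (y u)
    have hNw := hN0 (v - u)
    simp only [hD] at hVI
    linarith
end
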